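/- There exists a pre-associative algebra A and a formal distribution a(z) over A such that (a(z),a(z)) is both *-local and ≻-local with locality value 1, but the pair ((a₍₀₎a)(z), a(z)) is not ≻-local: namely A = F(X)/I where F(X) is the free pre-associative algebra on X = {aₙ : n ∈ ℤ} and I is generated by all aₙ*aₘ − a₀*a_{n+m} and aₙaₘ − a₀a_{n+m} with n ≠ 0; then for every N ∈ ℤ₊ there exist n,m ∈ ℤ with Σ_{s=0}^{N}(−1)^s C(N,s)(a₀a_{n−s})a_{m+s} ∉ I. -/

import Mathlib

/-- A bundled pre-associative (dendriform) algebra over the field `k`, with operations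
`st` (`*`) and `ju` (juxtaposition). -/
structure PreAssocPkg (k : Type) [Field k] where
  carrier : Type
  [grp : AddCommGroup carrier]
  [mod : Module k carrier]
  st : carrier →ₗ[k] carrier →ₗ[k] carrier
  ju : carrier →ₗ[k] carrier →ₗ[k] carrier
  st_assoc : ∀ x y z : carrier, st (st x y) z = st x (st y z)
  st_ju : ∀ x y z : carrier, ju (st x y) z = ju x (ju y z)
  ju_st : ∀ x y z : carrier,
    ju x (st y z) = st (ju x y) z + ju x (ju y z) - ju (ju x y) z

attribute [instance] PreAssocPkg.grp PreAssocPkg.mod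

noncomputable section StmtAux

variable (k : Type) [Field k]

/-- Carrier of the counterexample algebra: coordinates `(E-part, b, d, f)`. -/
abbrev StmtCar := (ℤ →₀ k) × k × k × k

/-- Sum of coordinates. -/
def StmtS : (ℤ →₀ k) →ₗ[k] k := Finsupp.lsum k fun _ => LinearMap.id

/-- Weighted sum of coordinates with weights `2^l`. -/
def StmtT : (ℤ →₀ k) →ₗ[k] k := Finsupp.lsum k fun l => (2:k)^l • LinearMap.id

@[simp] lemma StmtS_single (n : ℤ) : StmtS k (Finsupp.single n 1) = 1 := by
  simp only [StmtS, Finsupp.lsum_single, LinearMap.id_coe, id_eq]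

@[simp] lemma StmtT_single (n : ℤ) : StmtT k (Finsupp.single n 1) = (2:k)^n := by
  simp only [StmtT, Finsupp.lsum_single, LinearMap.smul_apply, LinearMap.id_coe, id_eq,
    smul_eq_mul, mul_one]

@[simp] lemma StmtS_T (n : ℤ) : StmtS k (LaurentPolynomial.T n : LaurentPolynomial k).coeff = 1 := by
  exact StmtS_single k n

@[simp] lemma StmtT_T (n : ℤ) : StmtT k (LaurentPolynomial.T n : LaurentPolynomial k).coeff = (2:k)^n := by
  exact StmtT_single k n

/-- The `*` operation. -/
def stmtSt : StmtCar k →ₗ[k] StmtCar k →ₗ[k] StmtCar k :=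
  LinearMap.mk₂ k (fun x y => (0, StmtS k x.1 * StmtS k y.1, 0, x.2.2.1 * StmtT k y.1))
    (by intro m₁ m₂ n; simp [Prod.ext_iff, map_add]; constructor <;> ring)
    (by intro c m n; simp [Prod.ext_iff, Prod.smul_mk]; constructor <;> ring)
    (by intro m n₁ n₂; simp [Prod.ext_iff, map_add]; constructor <;> ring)
    (by intro c m n; simp [Prod.ext_iff, Prod.smul_mk]; constructor <;> ring)

/-- The juxtaposition operation. -/
def stmtJu : StmtCar k →ₗ[k] StmtCar k →ₗ[k] StmtCar k :=
  LinearMap.mk₂ k (fun x y => (0, 0, StmtS k x.1 * StmtS k y.1, x.2.2.1 * StmtT k y.1))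
    (by intro m₁ m₂ n; simp [Prod.ext_iff, map_add]; constructor <;> ring)
    (by intro c m n; simp [Prod.ext_iff, Prod.smul_mk]; constructor <;> ring)
    (by intro m n₁ n₂; simp [Prod.ext_iff, map_add]; constructor <;> ring)
    (by intro c m n; simp [Prod.ext_iff, Prod.smul_mk]; constructor <;> ring)

/-- The bundled counterexample pre-associative algebra. -/
def stmtPkg : PreAssocPkg k where
  carrier := StmtCar k
  st := stmtSt k
  ju := stmtJu k
  st_assoc := by intro x y z; simp [stmtSt, Prod.ext_iff]
  st_ju := by intro x y z; simp [stmtSt, stmtJu, Prod.ext_iff]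
  ju_st := by intro x y z; simp [stmtSt, stmtJu, Prod.ext_iff]

/-- The distribution coefficients. -/
def stmtA (n : ℤ) : StmtCar k := (Finsupp.single n 1, 0, 0, 0)

@[simp] lemma stmtSt_a (n m : ℤ) :
    stmtSt k (stmtA k n) (stmtA k m) = (0, 1, 0, 0) := by
  simp [stmtSt, stmtA, Prod.ext_iff]

@[simp] lemma stmtJu_a (n m : ℤ) :
    stmtJu k (stmtA k n) (stmtA k m) = (0, 0, 1, 0) := by
  simp [stmtJu, stmtA, Prod.ext_iff]

@[simp] lemma stmtJu_ju_a (n m l : ℤ) :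
    stmtJu k (stmtJu k (stmtA k n) (stmtA k m)) (stmtA k l) = (0, 0, 0, (2:k)^l) := by
  rw [stmtJu_a]
  simp [stmtJu, stmtA, Prod.ext_iff, StmtS]

/-- Projection to the last coordinate. -/
def stmtPi : StmtCar k →ₗ[k] k :=
  (LinearMap.snd k k k).comp ((LinearMap.snd k k (k × k)).comp (LinearMap.snd k (ℤ →₀ k) (k × k × k)))

@[simp] lemma stmtPi_apply (x : StmtCar k) : stmtPi k x = x.2.2.2 := rfl

end StmtAux

/-- There exists a pre-associative algebra `A` and a formal distribution `a(z)` over `A`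
such that `(a(z), a(z))` is both `*`-local and `≻`-local with locality value exactly 1,
but the pair `((a₍₀₎a)(z), a(z))`, where `(a₍₀₎a)ₘ = a₀aₘ`, is not `≻`-local: for every
`N ∈ ℤ₊` the sums `Σ_{s=0}^{N} (−1)^s C(N,s) (a₀a_{n−s})a_{m+s}` do not all vanish. -/
theorem stmt_18 (k : Type) [Field k] [CharZero k] :
    ∃ (P : PreAssocPkg k) (a : ℤ → P.carrier),
      (∀ n m : ℤ, P.st (a n) (a m) - P.st (a (n - 1)) (a (m + 1)) = 0) ∧
      (∀ n m : ℤ, P.ju (a n) (a m) - P.ju (a (n - 1)) (a (m + 1)) = 0) ∧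
      ¬ (∀ n m : ℤ, P.st (a n) (a m) = 0) ∧
      ¬ (∀ n m : ℤ, P.ju (a n) (a m) = 0) ∧
      ¬ ∃ N : ℕ, ∀ n m : ℤ, ∑ s ∈ Finset.range (N + 1),
          ((-1) ^ s * (N.choose s) : ℤ) •
            P.ju (P.ju (a 0) (a (n - (s : ℤ)))) (a (m + (s : ℤ))) = 0 := by
  refine ⟨stmtPkg k, stmtA k, ?_, ?_, ?_, ?_, ?_⟩
  · intro n m
    show stmtSt k _ _ - stmtSt k _ _ = 0
    rw [stmtSt_a, stmtSt_a, sub_self]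
  · intro n m
    show stmtJu k _ _ - stmtJu k _ _ = 0
    rw [stmtJu_a, stmtJu_a, sub_self]
  · intro h
    have h0 := h 0 0
    have : stmtSt k (stmtA k 0) (stmtA k 0) = 0 := h0
    rw [stmtSt_a] at this
    exact one_ne_zero (congrArg (fun v => v.2.1) this)
  · intro h
    have h0 := h 0 0
    have : stmtJu k (stmtA k 0) (stmtA k 0) = 0 := h0
    rw [stmtJu_a] at this
    exact one_ne_zero (congrArg (fun v => v.2.2.1) this)
  · rintro ⟨N, h⟩
    have h0 : ∑ s ∈ Finset.range (N + 1), ((-1) ^ s * (N.choose s) : ℤ) •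
        stmtJu k (stmtJu k (stmtA k 0) (stmtA k ((0:ℤ) - s))) (stmtA k ((0:ℤ) + s)) = 0 := h 0 0
    have h1 := congrArg (stmtPi k) h0
    rw [map_sum, map_zero] at h1
    simp only [map_zsmul, stmtJu_ju_a, stmtPi_apply] at h1
    have h2 : ∑ s ∈ Finset.range (N + 1),
        ((-1:k) ^ s * (N.choose s : k)) * (2:k) ^ s = 0 := by
      rw [← h1]
      refine Finset.sum_congr rfl fun s _ => ?_
      have : ((0:ℤ) + (s:ℤ)) = (s : ℤ) := by ring
      rw [this, zpow_natCast, zsmul_eq_mul]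
      push_cast
      ring
    have h3 : ((-2:k) + 1) ^ N = 0 := by
      rw [add_pow, ← h2]
      refine Finset.sum_congr rfl fun s _ => ?_
      rw [one_pow, neg_pow (2:k) s]
      ring
    have h4 : ((-2:k) + 1) = -1 := by ring
    rw [h4] at h3
    exact pow_ne_zero N (neg_ne_zero.mpr one_ne_zero) h3
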